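/- For any two bijections f_0, f^* from the vertices of a connected path graph with N vertices to a token set T of size N, there exists a swap sequence transforming f_0 into f^* of length less than N^2. -/

import Mathlib

/-- A single swap on the path with vertices `{0, …, N-1}` (edges `{i, i+1}`). -/
def AdjSwap {N : ℕ} {T : Type*} [DecidableEq T] (f g : Fin N ≃ T) : Prop :=
  ∃ i j : Fin N, (i : ℕ) + 1 = (j : ℕ) ∧ g = (Equiv.swap i j).trans f

/-- `F 0 ~> F 1 ~> ⋯ ~> F l` is a swap sequence on the path. -/
def SwapSeq {N : ℕ} {T : Type*} [DecidableEq T] (l : ℕ) (F : ℕ → (Fin N ≃ T)) : Prop :=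
  ∀ j, j < l → AdjSwap (F j) (F (j + 1))


/-- inversion set of a permutation of `Fin N`. -/
def invSet {N : ℕ} (σ : Equiv.Perm (Fin N)) : Finset (Fin N × Fin N) :=
  Finset.univ.filter fun p => p.1 < p.2 ∧ σ p.2 < σ p.1

lemma mem_invSet {N : ℕ} {σ : Equiv.Perm (Fin N)} {p : Fin N × Fin N} :
    p ∈ invSet σ ↔ p.1 < p.2 ∧ σ p.2 < σ p.1 := by
  simp [invSet]

/-- no descent → identity -/
lemma eq_one_of_no_descent {N : ℕ} (σ : Equiv.Perm (Fin N))
    (h : ∀ i : ℕ, ∀ hi : i + 1 < N, σ ⟨i, Nat.lt_of_succ_lt hi⟩ < σ ⟨i + 1, hi⟩) :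
    σ = 1 := by
  cases N with
  | zero => ext i; exact absurd i.2 (Nat.not_lt_zero _)
  | succ n =>
    have hm : StrictMono ⇑σ := by
      rw [Fin.strictMono_iff_lt_succ]
      intro i
      exact h i.1 (Nat.succ_lt_succ i.2)
    let e : Fin (n+1) ≃o Fin (n+1) := hm.orderIsoOfSurjective ⇑σ σ.surjective
    have he : e = OrderIso.refl _ := Subsingleton.elim _ _
    ext x
    have h1 : e x = σ x := congrFun (StrictMono.coe_orderIsoOfSurjective ⇑σ hm σ.surjective) x
    rw [he] at h1
    simp [← h1]

lemma swap_lt_of_ne {N : ℕ} {a b x y : Fin N} (hab : (a : ℕ) + 1 = (b : ℕ))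
    (hxy : x < y) (hne : (x, y) ≠ (a, b)) :
    Equiv.swap a b x < Equiv.swap a b y := by
  have hab' : a < b := by rw [Fin.lt_iff_val_lt_val]; omega
  have hne' : x ≠ a ∨ y ≠ b := by
    by_contra hc
    push_neg at hc
    exact hne (by rw [hc.1, hc.2])
  rcases eq_or_ne x a with h | hxa
  · have hyb : y ≠ b := hne'.resolve_left (fun h' => h' h)
    have hya : y ≠ a := h ▸ ne_of_gt hxy
    rw [h, Equiv.swap_apply_left, Equiv.swap_apply_of_ne_of_ne hya hyb]
    rw [Fin.lt_iff_val_lt_val] at *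
    have : (y : ℕ) ≠ b := fun h => hyb (Fin.ext h)
    omega
  · rcases eq_or_ne x b with h | hxb
    · have hyb : y ≠ b := h ▸ ne_of_gt hxy
      have hya : y ≠ a := ne_of_gt (hab'.trans_le (h ▸ hxy.le))
      rw [h, Equiv.swap_apply_right, Equiv.swap_apply_of_ne_of_ne hya hyb]
      exact lt_of_le_of_lt hab'.le (h ▸ hxy)
    · rcases eq_or_ne y a with h | hya
      · rw [h, Equiv.swap_apply_of_ne_of_ne hxa hxb, Equiv.swap_apply_left]
        exact (h ▸ hxy).trans hab'
      · rcases eq_or_ne y b with h | hyb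
        · rw [h, Equiv.swap_apply_of_ne_of_ne hxa hxb, Equiv.swap_apply_right]
          rw [Fin.lt_iff_val_lt_val] at *
          have : (x : ℕ) ≠ a := fun h => hxa (Fin.ext h)
          omega
        · rw [Equiv.swap_apply_of_ne_of_ne hxa hxb, Equiv.swap_apply_of_ne_of_ne hya hyb]
          exact hxy

/-- multiplying by a descent transposition strictly decreases inversions -/
lemma invSet_card_lt {N : ℕ} (σ : Equiv.Perm (Fin N)) {a b : Fin N}
    (hab : (a : ℕ) + 1 = (b : ℕ)) (hd : σ b < σ a) :
    (invSet ((Equiv.swap a b).trans σ)).card < (invSet σ).card := by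
  have hab' : a < b := by rw [Fin.lt_iff_val_lt_val]; omega
  set s := Equiv.swap a b with hs
  have hmem : (a, b) ∈ invSet σ := mem_invSet.2 ⟨hab', hd⟩
  have key : (invSet (s.trans σ)).card ≤ (invSet σ \ {(a, b)}).card := by
    apply Finset.card_le_card_of_injOn (fun p => (s p.1, s p.2))
    · intro p hp
      rw [Finset.mem_coe, mem_invSet] at hp
      obtain ⟨hlt, hinv⟩ := hp
      simp only [Equiv.trans_apply] at hinv
      have hne' : (p.1, p.2) ≠ (a, b) := by
        rintro hc
        rw [Prod.mk.injEq] at hc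
        rw [hc.1, hc.2] at hinv
        rw [hs, Equiv.swap_apply_left, Equiv.swap_apply_right] at hinv
        exact absurd (hd.trans hinv) (lt_irrefl _)
      rw [Finset.mem_coe, Finset.mem_sdiff, mem_invSet]
      refine ⟨⟨swap_lt_of_ne hab hlt hne', hinv⟩, ?_⟩
      simp only [Finset.mem_singleton, Prod.mk.injEq, not_and]
      intro h1 h2
      have e1 : p.1 = b := by
        have := congrArg s h1
        rwa [Equiv.swap_apply_self, hs, Equiv.swap_apply_left] at this
      have e2 : p.2 = a := by
        have := congrArg s h2
        rwa [Equiv.swap_apply_self, hs, Equiv.swap_apply_right] at this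
      rw [e1, e2] at hlt
      exact absurd (hab'.trans hlt) (lt_irrefl _)
    · intro p _ q _ h
      rw [Prod.mk.injEq] at h
      exact Prod.ext (s.injective h.1) (s.injective h.2)
  calc (invSet (s.trans σ)).card ≤ (invSet σ \ {(a, b)}).card := key
    _ < (invSet σ).card :=
      Finset.card_lt_card (Finset.sdiff_ssubset (by simpa using hmem) (Finset.singleton_nonempty _))

lemma eq_one_of_invSet_empty {N : ℕ} (σ : Equiv.Perm (Fin N)) (h : invSet σ = ∅) : σ = 1 := by
  apply eq_one_of_no_descent
  intro i hi
  set a : Fin N := ⟨i, Nat.lt_of_succ_lt hi⟩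
  set b : Fin N := ⟨i + 1, hi⟩
  have hab : a < b := by rw [Fin.lt_iff_val_lt_val]; exact Nat.lt_succ_self i
  have hnm : (a, b) ∉ invSet σ := by rw [h]; exact Finset.notMem_empty _
  rw [mem_invSet] at hnm
  push_neg at hnm
  have hle : σ a ≤ σ b := hnm hab
  refine lt_of_le_of_ne hle (fun hc => ?_)
  have := σ.injective hc
  rw [Fin.ext_iff] at this
  simp [a, b] at this

lemma done_case {N : ℕ} {T : Type*} [DecidableEq T] (fstar f : Fin N ≃ T)
    (h : f.trans fstar.symm = 1) : f = fstar := by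
  ext x
  have := Equiv.congr_fun h x
  simp only [Equiv.trans_apply, Equiv.Perm.one_apply] at this
  exact (Equiv.symm_apply_eq fstar).1 this

lemma exists_seq {N : ℕ} {T : Type*} [DecidableEq T] (fstar : Fin N ≃ T) :
    ∀ d (f : Fin N ≃ T), (invSet (f.trans fstar.symm)).card ≤ d →
      ∃ l, ∃ F : ℕ → (Fin N ≃ T), l ≤ d ∧ SwapSeq l F ∧ F 0 = f ∧ F l = fstar := by
  intro d
  induction d with
  | zero =>
    intro f hf
    have hσ : f = fstar := done_case fstar f
      (eq_one_of_invSet_empty _ (Finset.card_eq_zero.1 (Nat.le_zero.1 hf)))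
    exact ⟨0, fun _ => fstar, le_refl _, fun j hj => absurd hj (Nat.not_lt_zero _), hσ.symm, rfl⟩
  | succ d ih =>
    intro f hf
    set σ := f.trans fstar.symm with hσdef
    by_cases hd : ∃ i : ℕ, ∃ hi : i + 1 < N, σ ⟨i + 1, hi⟩ < σ ⟨i, Nat.lt_of_succ_lt hi⟩
    · obtain ⟨i, hi, hlt⟩ := hd
      set a : Fin N := ⟨i, Nat.lt_of_succ_lt hi⟩
      set b : Fin N := ⟨i + 1, hi⟩
      have hab : (a : ℕ) + 1 = (b : ℕ) := rfl
      have hcard : (invSet ((Equiv.swap a b).trans σ)).card < (invSet σ).card :=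
        invSet_card_lt σ hab hlt
      set g := (Equiv.swap a b).trans f with hg
      have hgs : g.trans fstar.symm = (Equiv.swap a b).trans σ := by
        rw [hg, hσdef, Equiv.trans_assoc]
      obtain ⟨l, F, hl, hseq, hF0, hFl⟩ := ih g (by rw [hgs]; omega)
      refine ⟨l + 1, fun n => if n = 0 then f else F (n - 1), by omega, ?_, by simp, ?_⟩
      · intro j hj
        rcases Nat.eq_zero_or_pos j with rfl | hj0
        · simp only [if_pos rfl, if_neg one_ne_zero]
          show AdjSwap f (F (1 - 1))
          rw [show (1 : ℕ) - 1 = 0 from rfl, hF0]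
          exact ⟨a, b, hab, hg⟩
        · have h1 : j ≠ 0 := hj0.ne'
          have h2 : j + 1 ≠ 0 := by omega
          simp only [if_neg h1, if_neg h2]
          have e : j + 1 - 1 = (j - 1) + 1 := by omega
          rw [e]
          exact hseq (j - 1) (by omega)
      · simp only [if_neg (Nat.succ_ne_zero l), Nat.add_sub_cancel]
        exact hFl
    · push_neg at hd
      have hσ1 : σ = 1 := by
        apply eq_one_of_no_descent
        intro i hi
        refine lt_of_le_of_ne (hd i hi) (fun hc => ?_)
        have := σ.injective hc
        rw [Fin.ext_iff] at this
        simp at this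
      have hσ : f = fstar := done_case fstar f hσ1
      exact ⟨0, fun _ => fstar, Nat.zero_le _, fun j hj => absurd hj (Nat.not_lt_zero _),
        hσ.symm, rfl⟩


/-- any token placement on a (nonempty, hence connected) path with `N`
vertices can be transformed into any other by a swap sequence of length `< N²`. -/
theorem stmt2 {N : ℕ} {T : Type*} [DecidableEq T] (hN : 0 < N)
    (f₀ fstar : Fin N ≃ T) :
    ∃ (l : ℕ) (F : ℕ → (Fin N ≃ T)),
      l < N ^ 2 ∧ SwapSeq l F ∧ F 0 = f₀ ∧ F l = fstar := by
  obtain ⟨l, F, hl, hseq, hF0, hFl⟩ :=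
    exists_seq fstar (invSet (f₀.trans fstar.symm)).card f₀ (le_refl _)
  refine ⟨l, F, ?_, hseq, hF0, hFl⟩
  have hsub : invSet (f₀.trans fstar.symm) ⊂ Finset.univ := by
    rw [Finset.ssubset_univ_iff]
    intro hc
    have x0 : Fin N := ⟨0, hN⟩
    have : (x0, x0) ∈ invSet (f₀.trans fstar.symm) := by rw [hc]; exact Finset.mem_univ _
    rw [mem_invSet] at this
    exact absurd this.1 (lt_irrefl _)
  have hcard : (invSet (f₀.trans fstar.symm)).card < Fintype.card (Fin N × Fin N) :=
    Finset.card_lt_card hsub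
  have : Fintype.card (Fin N × Fin N) = N ^ 2 := by
    simp [Fintype.card_prod, sq]
  omega
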